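/- Partition recursion for λ_∅-expansion: the span of {λ_∅(x_1,...,x_n) : n ∈ ℕ, x_i ∈ N} equals the span of {λ(x_1)···λ(x_n) : n ∈ ℕ, x_i ∈ N} in the universal enveloping algebra, via the recursion λ_∅(x_1,...,x_n) = λ(x_1)λ_∅(x_2,...,x_n) − Σ_{i=2}^n λ_∅(x_2,...,x_1 x_i,...,x_n). Concretely: each monomial λ(x_1)···λ(x_n) equals λ_∅(x_1,...,x_n) plus a finite linear combination of λ_∅-vectors of strictly shorter length (with arguments that are products of the x_i), and conversely. -/

import Mathlib

variable {N : Type*} [Ring N] [Algebra ℂ N]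

attribute [local instance] LieRing.ofAssociativeRing

/-- The canonical Lie map `λ : N → U(N_Lie)` into the universal enveloping algebra of
`N` viewed as a Lie algebra (with commutator bracket). -/
noncomputable def uLam (x : N) : UniversalEnvelopingAlgebra ℂ N :=
  UniversalEnvelopingAlgebra.ι ℂ x

/-- The `λ_∅`-vectors, defined recursively by `λ_∅() = 1`, `λ_∅(x) = λ(x)` and
`λ_∅(x_1,…,x_n) = λ(x_1)λ_∅(x_2,…,x_n) − ∑_{i=2}^n λ_∅(x_2,…,x_1x_i,…,x_n)`. -/
noncomputable def lamE : List N → UniversalEnvelopingAlgebra ℂ N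
  | [] => 1
  | x :: xs =>
      uLam x * lamE xs - ∑ i : Fin xs.length, lamE (xs.set i (x * xs.get i))
  termination_by l => l.length
  decreasing_by
    · simp
    · simp [List.length_set]


lemma uLam_mul_lamE (x : N) (l : List N) :
    uLam x * lamE l =
      lamE (x :: l) + ∑ i : Fin l.length, lamE (l.set i (x * l.get i)) := by
  rw [lamE]; abel

lemma mul_mem_span (x : N) (n : ℕ) {d : UniversalEnvelopingAlgebra ℂ N}
    (hd : d ∈ Submodule.span ℂ
      {u : UniversalEnvelopingAlgebra ℂ N | ∃ l' : List N, l'.length < n ∧ u = lamE l'}) :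
    uLam x * d ∈ Submodule.span ℂ
      {u : UniversalEnvelopingAlgebra ℂ N | ∃ l' : List N, l'.length < n + 1 ∧ u = lamE l'} := by
  induction hd using Submodule.span_induction with
  | mem u hu =>
    obtain ⟨l', hl', rfl⟩ := hu
    rw [uLam_mul_lamE]
    refine add_mem (Submodule.subset_span ⟨x :: l', by simpa using hl', rfl⟩) ?_
    exact sum_mem fun i _ => Submodule.subset_span
      ⟨l'.set i (x * l'.get i), by simp [List.length_set]; omega, rfl⟩
  | zero => simpa using zero_mem _
  | add a b _ _ ha hb => rw [mul_add]; exact add_mem ha hb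
  | smul c a _ ha => rw [mul_smul_comm]; exact Submodule.smul_mem _ c ha

lemma diff_mem (l : List N) :
    (l.map fun a => uLam a).prod - lamE l ∈
      Submodule.span ℂ
        {u : UniversalEnvelopingAlgebra ℂ N |
          ∃ l' : List N, l'.length < l.length ∧ u = lamE l'} := by
  induction l with
  | nil => simpa [lamE] using zero_mem _
  | cons x xs ih =>
    have key : ((x :: xs).map fun a => uLam a).prod - lamE (x :: xs) =
        uLam x * ((xs.map fun a => uLam a).prod - lamE xs) +
          ∑ i : Fin xs.length, lamE (xs.set i (x * xs.get i)) := by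
      rw [List.map_cons, List.prod_cons, lamE, mul_sub]; abel
    rw [key]
    have h1 := mul_mem_span x xs.length ih
    simp only [List.length_cons]
    refine add_mem h1 (sum_mem fun i _ => Submodule.subset_span
      ⟨xs.set i (x * xs.get i), by simp [List.length_set], rfl⟩)

/-- **Partition recursion for the `λ_∅`-expansion**: the `λ_∅`-vectors and the
monomials `λ(x_1)⋯λ(x_n)` span the same subspace of the universal enveloping algebra;
concretely, each monomial `λ(x_1)⋯λ(x_n)` equals `λ_∅(x_1,…,x_n)` plus a finite linear
combination of `λ_∅`-vectors of strictly shorter length. -/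
theorem lamE_spanning :
    Submodule.span ℂ {u : UniversalEnvelopingAlgebra ℂ N | ∃ l : List N, u = lamE l}
        = Submodule.span ℂ
            {u : UniversalEnvelopingAlgebra ℂ N |
              ∃ l : List N, u = (l.map fun a => uLam a).prod} ∧
    ∀ l : List N,
      (l.map fun a => uLam a).prod - lamE l ∈
        Submodule.span ℂ
          {u : UniversalEnvelopingAlgebra ℂ N |
            ∃ l' : List N, l'.length < l.length ∧ u = lamE l'} := by
  refine ⟨le_antisymm ?_ ?_, diff_mem⟩
  · rw [Submodule.span_le]
    rintro u ⟨l, rfl⟩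
    -- strong induction on length
    have main : ∀ n : ℕ, ∀ l : List N, l.length ≤ n →
        lamE l ∈ Submodule.span ℂ
          {u : UniversalEnvelopingAlgebra ℂ N |
            ∃ l : List N, u = (l.map fun a => uLam a).prod} := by
      intro n
      induction n with
      | zero =>
        intro l hl
        rw [Nat.le_zero, List.length_eq_zero_iff] at hl
        subst hl
        exact Submodule.subset_span ⟨[], by simp [lamE]⟩
      | succ n ih =>
        intro l hl
        have hd := diff_mem (N := N) l
        have h1 : lamE l = (l.map fun a => uLam a).prod -
            ((l.map fun a => uLam a).prod - lamE l) := by abel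
        rw [h1]
        refine sub_mem (Submodule.subset_span ⟨l, rfl⟩) ?_
        refine Submodule.span_le.mpr ?_ hd
        rintro v ⟨l', hl', rfl⟩
        exact ih l' (by omega)
    exact main l.length l le_rfl
  · rw [Submodule.span_le]
    rintro u ⟨l, rfl⟩
    have hd := diff_mem (N := N) l
    have h1 : (l.map fun a => uLam a).prod =
        lamE l + ((l.map fun a => uLam a).prod - lamE l) := by abel
    rw [h1]
    refine add_mem (Submodule.subset_span ⟨l, rfl⟩) ?_
    refine Submodule.span_le.mpr ?_ hd
    rintro v ⟨l', hl', rfl⟩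
    exact Submodule.subset_span ⟨l', rfl⟩
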